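/- Two simple graphs G and H on a common finite vertex set V satisfy d_G(v) = d_H(v) for all v ∈ V if and only if H can be obtained from G by a finite sequence of 2-switches. -/

import Mathlib

open scoped Classical

/-- `TwoSwitch G H` holds when `H` is obtained from `G` by a single 2-switch: edges
`{u,v}, {w,x}` on four distinct vertices (with `{u,w}, {v,x}` non-edges) are replaced
by the edges `{u,w}, {v,x}`. -/
def TwoSwitch {V : Type*} (G H : SimpleGraph V) : Prop :=
  ∃ u v w x : V, u ≠ v ∧ u ≠ w ∧ u ≠ x ∧ v ≠ w ∧ v ≠ x ∧ w ≠ x ∧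
    G.Adj u v ∧ G.Adj w x ∧ ¬ G.Adj u w ∧ ¬ G.Adj v x ∧
    H = SimpleGraph.fromEdgeSet ((G.edgeSet \ {s(u, v), s(w, x)}) ∪ {s(u, w), s(v, x)})

namespace BergeAux
open SimpleGraph
variable {V : Type*}

lemma pairswap {a b : V} : s(a,b) = s(b,a) := Sym2.eq_swap

/-! ### Neighborhoods and degrees under a 2-switch -/

lemma nbr_u (G : SimpleGraph V) (u v w x : V) (huv : u ≠ v) (huw : u ≠ w) (hux : u ≠ x)
    (hvw : v ≠ w) (hvx : v ≠ x) (hwx : w ≠ x) :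
    (fromEdgeSet ((G.edgeSet \ {s(u, v), s(w, x)}) ∪ {s(u, w), s(v, x)})).neighborSet u
      = (G.neighborSet u \ {v}) ∪ {w} := by
  ext y
  simp only [mem_neighborSet, fromEdgeSet_adj, Set.mem_union, Set.mem_diff,
    Set.mem_insert_iff, Set.mem_singleton_iff, Sym2.eq_iff, mem_edgeSet]
  constructor
  · rintro ⟨(⟨ha, hb⟩ | h), hne⟩
    · left
      refine ⟨ha, fun hy => hb ?_⟩
      subst hy; tauto
    · right
      rcases h with (⟨h1,h2⟩|⟨h1,h2⟩)|(⟨h1,h2⟩|⟨h1,h2⟩) <;>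
        first | exact h2 | (exact absurd h1 (by tauto))
  · rintro (⟨ha, hb⟩ | rfl)
    · refine ⟨Or.inl ⟨ha, fun hc => ?_⟩, (G.ne_of_adj ha)⟩
      rcases hc with (⟨h1,h2⟩|⟨h1,h2⟩)|(⟨h1,h2⟩|⟨h1,h2⟩) <;> try subst h1 <;> try subst h2
      all_goals tauto
    · refine ⟨Or.inr ?_, huw⟩; tauto

lemma nbr_other (G : SimpleGraph V) (u v w x z : V) (hzu : z ≠ u) (hzv : z ≠ v)
    (hzw : z ≠ w) (hzx : z ≠ x) :
    (fromEdgeSet ((G.edgeSet \ {s(u, v), s(w, x)}) ∪ {s(u, w), s(v, x)})).neighborSet z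
      = G.neighborSet z := by
  ext y
  simp only [mem_neighborSet, fromEdgeSet_adj, Set.mem_union, Set.mem_diff,
    Set.mem_insert_iff, Set.mem_singleton_iff, Sym2.eq_iff, mem_edgeSet]
  constructor
  · rintro ⟨(⟨ha, _⟩ | h), hne⟩
    · exact ha
    · exfalso; tauto
  · intro ha
    refine ⟨Or.inl ⟨ha, fun hc => ?_⟩, G.ne_of_adj ha⟩
    rcases hc with (⟨h1,h2⟩|⟨h1,h2⟩)|(⟨h1,h2⟩|⟨h1,h2⟩) <;> tauto

lemma degree_ncard [Fintype V] (G : SimpleGraph V) (z : V) :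
    G.degree z = (G.neighborSet z).ncard := by
  rw [← G.card_neighborSet_eq_degree z, Set.ncard_eq_toFinset_card']; simp

lemma ncard_swapset [Fintype V] (s : Set V) (a b : V) (ha : a ∈ s) (hb : b ∉ s) :
    ((s \ {a}) ∪ {b}).ncard = s.ncard := by
  rw [Set.union_singleton, Set.ncard_insert_of_notMem (by simp [hb]) (Set.toFinite _),
    Set.ncard_diff_singleton_of_mem ha]
  have : 0 < s.ncard := (Set.ncard_pos (Set.toFinite s)).mpr ⟨a, ha⟩
  omega

theorem twoSwitch_degree [Fintype V] {G H : SimpleGraph V} (h : TwoSwitch G H) (z : V) :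
    G.degree z = H.degree z := by
  obtain ⟨u, v, w, x, huv, huw, hux, hvw, hvx, hwx, auv, awx, nuw, nvx, rfl⟩ := h
  rw [degree_ncard, degree_ncard]
  by_cases hzu : z = u
  · subst hzu
    rw [nbr_u G z v w x huv huw hux hvw hvx hwx,
      ncard_swapset _ v w (by simpa using auv) (by simpa using nuw)]
  by_cases hzv : z = v
  · subst hzv
    have he : ((G.edgeSet \ {s(u, z), s(w, x)}) ∪ {s(u, w), s(z, x)})
        = ((G.edgeSet \ {s(z, u), s(x, w)}) ∪ {s(z, x), s(u, w)}) := by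
      rw [show s(z,u) = s(u,z) from pairswap, show s(x,w) = s(w,x) from pairswap,
        Set.pair_comm (s(z,x))]
    rw [he, nbr_u G z u x w huv.symm hvx hvw hux huw hwx.symm,
      ncard_swapset _ u x (by simpa using auv.symm) (by simpa using nvx)]
  by_cases hzw : z = w
  · subst hzw
    have he : ((G.edgeSet \ {s(u, v), s(z, x)}) ∪ {s(u, z), s(v, x)})
        = ((G.edgeSet \ {s(z, x), s(u, v)}) ∪ {s(z, u), s(x, v)}) := by
      rw [show s(z,u) = s(u,z) from pairswap, show s(x,v) = s(v,x) from pairswap,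
        Set.pair_comm (s(u,v))]
    rw [he, nbr_u G z x u v hwx huw.symm hvw.symm hux.symm hvx.symm huv,
      ncard_swapset _ x u (by simpa using awx)
        (by simp only [mem_neighborSet]; exact fun h => nuw h.symm)]
  by_cases hzx : z = x
  · subst hzx
    have he : ((G.edgeSet \ {s(u, v), s(w, z)}) ∪ {s(u, w), s(v, z)})
        = ((G.edgeSet \ {s(z, w), s(v, u)}) ∪ {s(z, v), s(w, u)}) := by
      rw [show s(z,w) = s(w,z) from pairswap, show s(v,u) = s(u,v) from pairswap,
        show s(z,v) = s(v,z) from pairswap, show s(w,u) = s(u,w) from pairswap,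
        Set.pair_comm (s(w,z)), Set.pair_comm (s(v,z))]
    rw [he, nbr_u G z w v u hwx.symm hvx.symm hux.symm hvw.symm huw.symm huv.symm,
      ncard_swapset _ w v (by simpa using awx.symm)
        (by simp only [mem_neighborSet]; exact fun h => nvx h.symm)]
  rw [nbr_other G u v w x z hzu hzv hzw hzx]

/-! ### Symmetry of 2-switches -/

lemma edgeSet_clean (G : SimpleGraph V) (p q : Sym2 V) {r t : Sym2 V}
    (hr : ¬r.IsDiag) (ht : ¬t.IsDiag) :
    (SimpleGraph.fromEdgeSet ((G.edgeSet \ {p, q}) ∪ {r, t})).edgeSet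
      = (G.edgeSet \ {p, q}) ∪ {r, t} := by
  ext e
  rw [edgeSet_fromEdgeSet]
  simp only [Set.mem_diff, Set.mem_setOf_eq, and_iff_left_iff_imp]
  rintro (⟨hm, -⟩ | hf) hd
  · exact G.not_isDiag_of_mem_edgeSet hm hd
  · rcases hf with rfl | rfl
    · exact hr hd
    · exact ht hd

lemma twoSwitch_symm {G H : SimpleGraph V} (h : TwoSwitch G H) : TwoSwitch H G := by
  obtain ⟨u, v, w, x, huv, huw, hux, hvw, hvx, hwx, auv, awx, nuw, nvx, rfl⟩ := h
  have hE := edgeSet_clean G (s(u,v)) (s(w,x)) (r := s(u,w)) (t := s(v,x))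
    (by rw [Sym2.mk_isDiag_iff]; exact huw) (by rw [Sym2.mk_isDiag_iff]; exact hvx)
  have n1 : s(u,v) ≠ s(u,w) := by intro hc; rw [Sym2.eq_iff] at hc; tauto
  have n2 : s(u,v) ≠ s(v,x) := by intro hc; rw [Sym2.eq_iff] at hc; tauto
  have n3 : s(w,x) ≠ s(u,w) := by intro hc; rw [Sym2.eq_iff] at hc; tauto
  have n4 : s(w,x) ≠ s(v,x) := by intro hc; rw [Sym2.eq_iff] at hc; tauto
  have auv' : s(u,v) ∈ G.edgeSet := auv
  have awx' : s(w,x) ∈ G.edgeSet := awx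
  have nuw' : s(u,w) ∉ G.edgeSet := nuw
  have nvx' : s(v,x) ∉ G.edgeSet := nvx
  refine ⟨u, w, v, x, huw, huv, hux, hvw.symm, hwx, hvx, ?_, ?_, ?_, ?_, ?_⟩
  · rw [fromEdgeSet_adj]; exact ⟨by right; left; rfl, huw⟩
  · rw [fromEdgeSet_adj]; exact ⟨by right; right; rfl, hvx⟩
  · rw [fromEdgeSet_adj]
    rintro ⟨(⟨-, hno⟩ | hf), -⟩
    · exact hno (by left; rfl)
    · rcases hf with hc | hc
      · exact n1 hc
      · exact n2 hc
  · rw [fromEdgeSet_adj]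
    rintro ⟨(⟨-, hno⟩ | hf), -⟩
    · exact hno (by right; rfl)
    · rcases hf with hc | hc
      · exact n3 hc
      · exact n4 hc
  · have hset : ((fromEdgeSet ((G.edgeSet \ {s(u,v), s(w,x)}) ∪ {s(u,w), s(v,x)})).edgeSet
        \ {s(u,w), s(v,x)}) ∪ {s(u,v), s(w,x)} = G.edgeSet := by
      rw [hE]
      ext e
      simp only [Set.mem_union, Set.mem_diff, Set.mem_insert_iff, Set.mem_singleton_iff]
      constructor
      · rintro (⟨(⟨hm, -⟩ | hf), hnf⟩ | (rfl | rfl))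
        · exact hm
        · exact absurd hf hnf
        · exact auv'
        · exact awx'
      · intro hm
        by_cases h0 : e = s(u,v)
        · right; left; exact h0
        by_cases h2 : e = s(w,x)
        · right; right; exact h2
        · left
          refine ⟨Or.inl ⟨hm, ?_⟩, ?_⟩
          · rintro (rfl | rfl) <;> tauto
          · rintro (rfl | rfl) <;> tauto
    rw [hset, fromEdgeSet_edgeSet]

/-! ### The symmetric-difference measure -/

noncomputable def delta (G H : SimpleGraph V) : ℕ := (symmDiff G.edgeSet H.edgeSet).ncard

lemma delta_comm (G H : SimpleGraph V) : delta G H = delta H G := by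
  rw [delta, delta, symmDiff_comm]

lemma eq_of_delta_eq_zero [Fintype V] {G H : SimpleGraph V} (h : delta G H = 0) : G = H := by
  rw [delta, Set.ncard_eq_zero (Set.toFinite _)] at h
  rw [Set.bot_eq_empty.symm] at h
  exact SimpleGraph.edgeSet_inj.mp (symmDiff_eq_bot.mp h)

lemma ncard_lt_of_sub {α : Type*} [Finite α] {D D' : Set α} {x y z w : α}
    (hx : x ∈ D) (hy : y ∈ D) (hz : z ∈ D) (hxy : x ≠ y) (hxz : x ≠ z) (hyz : y ≠ z)
    (hsub : D' ⊆ (D \ {x, y, z}) ∪ {w}) : D'.ncard < D.ncard := by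
  have h1 : D'.ncard ≤ ((D \ {x, y, z}) ∪ {w}).ncard :=
    Set.ncard_le_ncard hsub (Set.toFinite _)
  have h2 : ((D \ {x, y, z}) ∪ {w}).ncard ≤ (D \ {x, y, z}).ncard + 1 :=
    le_trans (Set.ncard_union_le _ _) (by rw [Set.ncard_singleton])
  have hs3 : ({x, y, z} : Set α) ⊆ D := by
    rintro e he
    rcases he with rfl | rfl | rfl <;> assumption
  have hc3 : ({x, y, z} : Set α).ncard = 3 := by
    rw [Set.ncard_insert_of_notMem (by simp [hxy, hxz]) (Set.toFinite _),
      Set.ncard_insert_of_notMem (by simp [hyz]) (Set.toFinite _), Set.ncard_singleton]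
  have h3 : (D \ {x, y, z}).ncard = D.ncard - 3 := by
    rw [Set.ncard_diff hs3 (Set.toFinite _), hc3]
  have h4 : 3 ≤ D.ncard := hc3 ▸ Set.ncard_le_ncard hs3 (Set.toFinite _)
  omega

/-! ### The two kinds of delta-decreasing switches -/

lemma goodA [Fintype V] (G H : SimpleGraph V) (a b c d : V)
    (hab : a ≠ b) (hac : a ≠ c) (had : a ≠ d) (hbc : b ≠ c) (hbd : b ≠ d) (hcd : c ≠ d)
    (e0G : s(a,b) ∈ G.edgeSet) (e0H : s(a,b) ∉ H.edgeSet)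
    (e2G : s(c,d) ∈ G.edgeSet) (e2H : s(c,d) ∉ H.edgeSet)
    (e1H : s(b,c) ∈ H.edgeSet) (e1G : s(b,c) ∉ G.edgeSet)
    (ch : s(a,d) ∉ G.edgeSet) :
    ∃ G', TwoSwitch G G' ∧ delta G' H < delta G H := by
  refine ⟨fromEdgeSet ((G.edgeSet \ {s(b,a), s(c,d)}) ∪ {s(b,c), s(a,d)}), ?_, ?_⟩
  · exact ⟨b, a, c, d, hab.symm, hbc, hbd, hac, had, hcd,
      (G.mem_edgeSet.mp e0G).symm, G.mem_edgeSet.mp e2G,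
      fun hadj => e1G (G.mem_edgeSet.mpr hadj),
      fun hadj => ch (G.mem_edgeSet.mpr hadj), rfl⟩
  · rw [show s(b,a) = s(a,b) from pairswap]
    have hE := edgeSet_clean G (s(a,b)) (s(c,d)) (r := s(b,c)) (t := s(a,d))
      (by rw [Sym2.mk_isDiag_iff]; exact hbc) (by rw [Sym2.mk_isDiag_iff]; exact had)
    have hxy : s(a,b) ≠ s(c,d) := by intro hc'; rw [Sym2.eq_iff] at hc'; tauto
    have hxz : s(a,b) ≠ s(b,c) := by intro hc'; rw [Sym2.eq_iff] at hc'; tauto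
    have hyz : s(c,d) ≠ s(b,c) := by intro hc'; rw [Sym2.eq_iff] at hc'; tauto
    have hxw : s(a,b) ≠ s(a,d) := by intro hc'; rw [Sym2.eq_iff] at hc'; tauto
    have hyw : s(c,d) ≠ s(a,d) := by intro hc'; rw [Sym2.eq_iff] at hc'; tauto
    have hzw : s(b,c) ≠ s(a,d) := by intro hc'; rw [Sym2.eq_iff] at hc'; tauto
    refine ncard_lt_of_sub (x := s(a,b)) (y := s(c,d)) (z := s(b,c)) (w := s(a,d))
      (by rw [Set.mem_symmDiff]; exact Or.inl ⟨e0G, e0H⟩)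
      (by rw [Set.mem_symmDiff]; exact Or.inl ⟨e2G, e2H⟩)
      (by rw [Set.mem_symmDiff]; exact Or.inr ⟨e1H, e1G⟩) hxy hxz hyz ?_
    intro e he
    rw [Set.mem_symmDiff, hE] at he
    by_cases h0 : e = s(a,b)
    · exfalso
      subst h0
      rcases he with ⟨hm, -⟩ | ⟨hm, -⟩
      · rcases hm with ⟨-, hno⟩ | hf
        · exact hno (by left; rfl)
        · rcases hf with hc' | hc'
          · exact hxz hc'
          · exact hxw hc'
      · exact e0H hm
    by_cases h2 : e = s(c,d)
    · exfalso
      subst h2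
      rcases he with ⟨hm, -⟩ | ⟨hm, -⟩
      · rcases hm with ⟨-, hno⟩ | hf
        · exact hno (by right; rfl)
        · rcases hf with hc' | hc'
          · exact hyz hc'
          · exact hyw hc'
      · exact e2H hm
    by_cases h1 : e = s(b,c)
    · exfalso
      subst h1
      rcases he with ⟨-, hnH⟩ | ⟨-, hnG'⟩
      · exact hnH e1H
      · exact hnG' (Or.inr (by left; rfl))
    by_cases hch : e = s(a,d)
    · right; exact hch
    · left
      refine ⟨?_, by rintro (rfl | rfl | rfl) <;> tauto⟩
      rw [Set.mem_symmDiff]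
      rcases he with ⟨hm, hnH⟩ | ⟨hmH, hnG'⟩
      · rcases hm with ⟨hmG, -⟩ | hf
        · exact Or.inl ⟨hmG, hnH⟩
        · exact absurd hf (by rintro (rfl | rfl) <;> tauto)
      · refine Or.inr ⟨hmH, fun hmG => hnG' (Or.inl ⟨hmG, ?_⟩)⟩
        rintro (rfl | rfl) <;> tauto

lemma goodB [Fintype V] (G H : SimpleGraph V) (a b c d : V)
    (hab : a ≠ b) (hac : a ≠ c) (had : a ≠ d) (hbc : b ≠ c) (hbd : b ≠ d) (hcd : c ≠ d)
    (e0G : s(a,b) ∈ G.edgeSet) (e0H : s(a,b) ∉ H.edgeSet)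
    (e2G : s(c,d) ∈ G.edgeSet) (e2H : s(c,d) ∉ H.edgeSet)
    (e1H : s(b,c) ∈ H.edgeSet) (e1G : s(b,c) ∉ G.edgeSet)
    (_chG : s(a,d) ∈ G.edgeSet) (chH : s(a,d) ∈ H.edgeSet) :
    ∃ H', TwoSwitch H H' ∧ delta G H' < delta G H := by
  refine ⟨fromEdgeSet ((H.edgeSet \ {s(b,c), s(a,d)}) ∪ {s(b,a), s(c,d)}), ?_, ?_⟩
  · exact ⟨b, c, a, d, hbc, hab.symm, hbd, hac.symm, hcd, had,
      H.mem_edgeSet.mp e1H, H.mem_edgeSet.mp chH,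
      fun hadj => e0H (H.mem_edgeSet.mpr hadj.symm),
      fun hadj => e2H (H.mem_edgeSet.mpr hadj), rfl⟩
  · rw [show s(b,a) = s(a,b) from pairswap]
    have hE := edgeSet_clean H (s(b,c)) (s(a,d)) (r := s(a,b)) (t := s(c,d))
      (by rw [Sym2.mk_isDiag_iff]; exact hab) (by rw [Sym2.mk_isDiag_iff]; exact hcd)
    have n_bc_ab : s(b,c) ≠ s(a,b) := by intro hc'; rw [Sym2.eq_iff] at hc'; tauto
    have n_bc_cd : s(b,c) ≠ s(c,d) := by intro hc'; rw [Sym2.eq_iff] at hc'; tauto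
    have n_ab_cd : s(a,b) ≠ s(c,d) := by intro hc'; rw [Sym2.eq_iff] at hc'; tauto
    have n_bc_ad : s(b,c) ≠ s(a,d) := by intro hc'; rw [Sym2.eq_iff] at hc'; tauto
    have n_ab_ad : s(a,b) ≠ s(a,d) := by intro hc'; rw [Sym2.eq_iff] at hc'; tauto
    have n_cd_ad : s(c,d) ≠ s(a,d) := by intro hc'; rw [Sym2.eq_iff] at hc'; tauto
    refine ncard_lt_of_sub (x := s(b,c)) (y := s(a,b)) (z := s(c,d)) (w := s(a,d))
      (by rw [Set.mem_symmDiff]; exact Or.inr ⟨e1H, e1G⟩)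
      (by rw [Set.mem_symmDiff]; exact Or.inl ⟨e0G, e0H⟩)
      (by rw [Set.mem_symmDiff]; exact Or.inl ⟨e2G, e2H⟩) n_bc_ab n_bc_cd n_ab_cd ?_
    intro e he
    rw [Set.mem_symmDiff, hE] at he
    by_cases h1 : e = s(b,c)
    · exfalso
      subst h1
      rcases he with ⟨hm, -⟩ | ⟨hm, -⟩
      · exact e1G hm
      · rcases hm with ⟨-, hno⟩ | hf
        · exact hno (by left; rfl)
        · rcases hf with hc' | hc'
          · exact n_bc_ab hc'
          · exact n_bc_cd hc'
    by_cases hch : e = s(a,d)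
    · right; exact hch
    by_cases h0 : e = s(a,b)
    · exfalso
      subst h0
      rcases he with ⟨-, hnH'⟩ | ⟨-, hnG⟩
      · exact hnH' (Or.inr (by left; rfl))
      · exact hnG e0G
    by_cases h2 : e = s(c,d)
    · exfalso
      subst h2
      rcases he with ⟨-, hnH'⟩ | ⟨-, hnG⟩
      · exact hnH' (Or.inr (by right; rfl))
      · exact hnG e2G
    · left
      refine ⟨?_, by rintro (rfl | rfl | rfl) <;> tauto⟩
      rw [Set.mem_symmDiff]
      rcases he with ⟨hmG, hnH'⟩ | ⟨hmH', hnG⟩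
      · refine Or.inl ⟨hmG, fun hmH => hnH' (Or.inl ⟨hmH, ?_⟩)⟩
        rintro (rfl | rfl) <;> tauto
      · rcases hmH' with ⟨hmH, -⟩ | hf
        · exact Or.inr ⟨hmH, hnG⟩
        · exact absurd hf (by rintro (rfl | rfl) <;> tauto)

def IsAltWalk (G H : SimpleGraph V) (L : ℕ) (f : ℕ → V) : Prop :=
  0 < L ∧ Even L ∧ (∀ k, f (k + L) = f k) ∧
    (∀ k, Even k → s(f k, f (k+1)) ∈ G.edgeSet \ H.edgeSet) ∧
    (∀ k, ¬ Even k → s(f k, f (k+1)) ∈ H.edgeSet \ G.edgeSet)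

lemma balance [Fintype V] {G H : SimpleGraph V} (hdeg : ∀ v, G.degree v = H.degree v)
    {z y : V} (h : s(z,y) ∈ G.edgeSet \ H.edgeSet) :
    ∃ y', s(z,y') ∈ H.edgeSet \ G.edgeSet := by
  classical
  have h1 := Set.ncard_inter_add_ncard_diff_eq_ncard (G.neighborSet z) (H.neighborSet z)
    (Set.toFinite _)
  have h2 := Set.ncard_inter_add_ncard_diff_eq_ncard (H.neighborSet z) (G.neighborSet z)
    (Set.toFinite _)
  rw [Set.inter_comm] at h2
  have hdz : (G.neighborSet z).ncard = (H.neighborSet z).ncard := by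
    rw [← degree_ncard, ← degree_ncard]; exact hdeg z
  have hAB : (G.neighborSet z \ H.neighborSet z).ncard
      = (H.neighborSet z \ G.neighborSet z).ncard := by omega
  have hyA : y ∈ G.neighborSet z \ H.neighborSet z := by
    refine ⟨G.mem_edgeSet.mp h.1, fun hy => h.2 ?_⟩
    exact H.mem_edgeSet.mpr hy
  have hBpos : 0 < (H.neighborSet z \ G.neighborSet z).ncard := by
    rw [← hAB]
    exact (Set.ncard_pos (Set.toFinite _)).mpr ⟨y, hyA⟩
  obtain ⟨y', hy'⟩ := (Set.ncard_pos (Set.toFinite _)).mp hBpos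
  exact ⟨y', ⟨H.mem_edgeSet.mpr hy'.1, fun hc => hy'.2 (G.mem_edgeSet.mp hc)⟩⟩

lemma exists_altWalk_of_red [Fintype V] {G H : SimpleGraph V}
    (hdeg : ∀ v, G.degree v = H.degree v) {a0 b0 : V}
    (h0 : s(a0,b0) ∈ G.edgeSet \ H.edgeSet) :
    (∃ L f, IsAltWalk G H L f) ∨ (∃ L f, IsAltWalk H G L f) := by
  classical
  set C : ℕ → Set (Sym2 V) := fun k =>
    if Even k then G.edgeSet \ H.edgeSet else H.edgeSet \ G.edgeSet with hC
  have step : ∀ (k : ℕ) (p : V × V), s(p.1, p.2) ∈ C k → ∃ y, s(p.2, y) ∈ C (k+1) := by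
    intro k p hp
    by_cases hk : Even k
    · rw [hC] at hp ⊢
      simp only [hk, if_true] at hp
      have hk1 : ¬ Even (k+1) := by simp [Nat.even_add_one, hk]
      simp only [hk1, if_false]
      have : s(p.2, p.1) ∈ G.edgeSet \ H.edgeSet := by rwa [pairswap] at hp
      exact balance hdeg this
    · rw [hC] at hp ⊢
      simp only [hk, if_false] at hp
      have hk1 : Even (k+1) := by simpa [Nat.even_add_one] using hk
      simp only [hk1, if_true]
      have : s(p.2, p.1) ∈ H.edgeSet \ G.edgeSet := by rwa [pairswap] at hp
      exact balance (fun v => (hdeg v).symm) this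
  have h0' : s(((a0, b0) : V × V).1, ((a0, b0) : V × V).2) ∈ C 0 := by
    simp only [hC, Even.zero, if_true]; exact h0
  let F : (k : ℕ) → {p : V × V // s(p.1, p.2) ∈ C k} := fun k =>
    Nat.rec ⟨(a0, b0), h0'⟩
      (fun k ih => ⟨(ih.1.2, Classical.choose (step k ih.1 ih.2)),
        Classical.choose_spec (step k ih.1 ih.2)⟩) k
  set f : ℕ → V := fun k => (F k).1.1 with hf
  have hcol : ∀ k, s(f k, f (k+1)) ∈ C k := fun k => (F k).2
  -- pigeonhole
  obtain ⟨i, j, hij, hmap⟩ := Finite.exists_ne_map_eq_of_infinite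
    (fun k : ℕ => ((f k, ⟨k % 2, Nat.mod_lt _ two_pos⟩) : V × Fin 2))
  wlog hlt : i < j generalizing i j
  · exact this j i hij.symm hmap.symm (by omega)
  have hfij : f i = f j := (Prod.mk.inj hmap).1
  have hpar : i % 2 = j % 2 := by
    have h2 := (Prod.mk.inj hmap).2
    exact congrArg Fin.val h2
  set L : ℕ := j - i with hL
  have hLpos : 0 < L := by omega
  have hLeven : Even L := by
    rw [Nat.even_sub (le_of_lt hlt), Nat.even_iff, Nat.even_iff, hpar]
  have hmod2 : ∀ k : ℕ, k % L % 2 = k % 2 :=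
    fun k => Nat.mod_mod_of_dvd k hLeven.two_dvd
  set w : ℕ → V := fun k => f (i + k % L) with hw
  have hper : ∀ k, w (k + L) = w k := by
    intro k; simp only [hw, Nat.add_mod_right]
  have hedge : ∀ k, s(w k, w (k+1)) ∈ C (i + k % L) := by
    intro k
    have hr : k % L < L := Nat.mod_lt _ hLpos
    by_cases hrl : k % L = L - 1
    · have h1 : (k+1) % L = 0 := by
        rw [Nat.add_mod, hrl]
        simp [Nat.sub_add_cancel hLpos, Nat.mod_self]
      have hwk1 : w (k+1) = f i := by simp only [hw, h1, Nat.add_zero]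
      have : w k = f (i + k % L) := rfl
      rw [hwk1, this]
      have : f i = f (i + k % L + 1) := by
        rw [hfij]
        congr 1
        omega
      rw [this]
      exact hcol (i + k % L)
    · have h1 : (k+1) % L = k % L + 1 := by
        rw [Nat.add_mod]
        have h2 : k % L + 1 % L < L := by
          have : 1 % L ≤ 1 := Nat.mod_le 1 L
          omega
        rw [Nat.mod_eq_of_lt h2]
        have : 1 % L = 1 ∨ L = 1 := by
          rcases Nat.lt_or_ge 1 L with h | h
          · left; exact Nat.mod_eq_of_lt h
          · right; omega
        rcases this with h | h
        · rw [h]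
        · omega
      have : w (k+1) = f (i + k % L + 1) := by
        simp only [hw, h1, Nat.add_assoc]
      rw [this]
      exact hcol (i + k % L)
  -- decide phase
  by_cases hi : Even i
  · left
    refine ⟨L, w, hLpos, hLeven, hper, ?_, ?_⟩
    · intro k hk
      have := hedge k
      have hpar2 : Even (i + k % L) := by
        rw [Nat.even_add]
        constructor
        · intro; rw [Nat.even_iff, hmod2, ← Nat.even_iff]; exact hk
        · intro; exact hi
      simpa only [hC, hpar2, if_true] using this
    · intro k hk
      have := hedge k
      have hpar2 : ¬ Even (i + k % L) := by
        rw [Nat.even_add]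
        intro hcon
        exact hk (by rw [Nat.even_iff, ← hmod2 k, ← Nat.even_iff]; exact hcon.mp hi)
      simpa only [hC, hpar2, if_false] using this
  · right
    refine ⟨L, w, hLpos, hLeven, hper, ?_, ?_⟩
    · intro k hk
      have := hedge k
      have hpar2 : ¬ Even (i + k % L) := by
        rw [Nat.even_add]
        intro hcon
        exact hi (hcon.mpr (by rw [Nat.even_iff, hmod2, ← Nat.even_iff]; exact hk))
      simpa only [hC, hpar2, if_false] using this
    · intro k hk
      have := hedge k
      have hkL : ¬ Even (k % L) := by
        rw [Nat.even_iff, hmod2, ← Nat.even_iff]; exact hk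
      have hpar2 : Even (i + k % L) := by
        rw [Nat.even_add]
        exact ⟨fun hcon => absurd hcon hi, fun hcon => absurd hcon hkL⟩
      simpa only [hC, hpar2, if_true] using this

/-! ### The core walk induction -/

lemma walk_core [Fintype V] (n : ℕ)
    (IH : ∀ m, m < n → ∀ (G H : SimpleGraph V) (f : ℕ → V), 0 < m →
      (∀ k, f (k + 2*m) = f k) →
      (∀ k, Even k → s(f k, f (k+1)) ∈ G.edgeSet \ H.edgeSet) →
      (∀ k, ¬ Even k → s(f k, f (k+1)) ∈ H.edgeSet \ G.edgeSet) →
      (∃ G', TwoSwitch G G' ∧ delta G' H < delta G H) ∨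
        (∃ H', TwoSwitch H H' ∧ delta G H' < delta G H))
    (G H : SimpleGraph V) (g : ℕ → V) (hn : 2 ≤ n)
    (hper : ∀ k, g (k + 2*n) = g k)
    (hred : ∀ k, Even k → s(g k, g (k+1)) ∈ G.edgeSet \ H.edgeSet)
    (hblue : ∀ k, ¬ Even k → s(g k, g (k+1)) ∈ H.edgeSet \ G.edgeSet)
    (h03 : g 0 ≠ g 3) :
    (∃ G', TwoSwitch G G' ∧ delta G' H < delta G H) ∨
      (∃ H', TwoSwitch H H' ∧ delta G H' < delta G H) := by
  have e0 : s(g 0, g 1) ∈ G.edgeSet \ H.edgeSet := hred 0 (by norm_num)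
  have e1 : s(g 1, g 2) ∈ H.edgeSet \ G.edgeSet := hblue 1 (by decide)
  have e2 : s(g 2, g 3) ∈ G.edgeSet \ H.edgeSet := hred 2 (by norm_num)
  have hab : g 0 ≠ g 1 := (G.mem_edgeSet.mp e0.1).ne
  have hbc : g 1 ≠ g 2 := (H.mem_edgeSet.mp e1.1).ne
  have hcd : g 2 ≠ g 3 := (G.mem_edgeSet.mp e2.1).ne
  have hac : g 0 ≠ g 2 := by
    intro h
    apply e1.2
    rw [← h, show s(g 1, g 0) = s(g 0, g 1) from pairswap]
    exact e0.1
  have hbd : g 1 ≠ g 3 := by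
    intro h
    apply e1.2
    rw [h, show s(g 3, g 2) = s(g 2, g 3) from pairswap]
    exact e2.1
  by_cases hch : s(g 0, g 3) ∈ G.edgeSet
  · by_cases hchH : s(g 0, g 3) ∈ H.edgeSet
    · exact Or.inr (goodB G H (g 0) (g 1) (g 2) (g 3) hab hac h03 hbc hbd hcd
        e0.1 e0.2 e2.1 e2.2 e1.1 e1.2 hch hchH)
    · -- the chord is a `G`-only edge: shorten the walk
      set L' : ℕ := 2*n - 2 with hL'
      have hL2 : 2 ≤ L' := by omega
      have hgp : g (2*n) = g 0 := by
        have := hper 0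
        rwa [Nat.zero_add] at this
      refine IH (n-1) (by omega) G H
        (fun k => if k % L' = 0 then g 0 else g (k % L' + 2)) (by omega) ?_ ?_ ?_
      · intro k
        have h1 : k + 2*(n-1) = k + L' := by omega
        simp only [h1, Nat.add_mod_right]
      all_goals {
        intro k hk
        beta_reduce
        have hLpos : 0 < L' := by omega
        have hr : k % L' < L' := Nat.mod_lt _ hLpos
        have hmod2 : k % L' % 2 = k % 2 := Nat.mod_mod_of_dvd k ⟨n-1, by omega⟩
        have e1m : 1 % L' = 1 := Nat.mod_eq_of_lt (by omega)
        by_cases hr0 : k % L' = 0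
        case pos =>
          have hkeven : k % 2 = 0 := by rw [← hmod2, hr0]
          have h1 : (k+1) % L' = 1 := by
            rw [Nat.add_mod, hr0, e1m]
            exact Nat.mod_eq_of_lt (by omega)
          rw [h1, hr0]
          norm_num
          first
          | exact ⟨hch, hchH⟩
          | (exfalso; rw [Nat.even_iff] at hk; omega)
        case neg =>
        by_cases hrl : k % L' = L' - 1
        case pos =>
          have hkodd : k % 2 = 1 := by
            rw [← hmod2, hrl]; omega
          have h1 : (k+1) % L' = 0 := by
            rw [Nat.add_mod, hrl, e1m, show L' - 1 + 1 = L' from by omega, Nat.mod_self]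
          rw [h1, hrl, if_neg (show ¬ (L' - 1 = 0) by omega), if_pos rfl,
            show L' - 1 + 2 = 2*n - 1 from by omega, ← hgp]
          first
          | (exfalso; rw [Nat.even_iff] at hk; omega)
          | (have hedge := hblue (2*n - 1) (by rw [Nat.even_iff]; omega)
             rw [show 2*n - 1 + 1 = 2*n from by omega] at hedge
             exact hedge)
        case neg =>
          have h1 : (k+1) % L' = k % L' + 1 := by
            rw [Nat.add_mod, e1m]
            exact Nat.mod_eq_of_lt (by omega)
          have h2 : ¬ (k % L' + 1 = 0) := by omega
          rw [h1, if_neg hr0, if_neg h2,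
            show k % L' + 1 + 2 = k % L' + 2 + 1 from by omega]
          first
          | exact hred (k % L' + 2) (by rw [Nat.even_iff] at hk ⊢; omega)
          | exact hblue (k % L' + 2) (by rw [Nat.even_iff] at hk ⊢; omega)
      }
  · exact Or.inl (goodA G H (g 0) (g 1) (g 2) (g 3) hab hac h03 hbc hbd hcd
      e0.1 e0.2 e2.1 e2.2 e1.1 e1.2 hch)


lemma walk_lemma [Fintype V] : ∀ n : ℕ, ∀ (G H : SimpleGraph V) (f : ℕ → V), 0 < n →
    (∀ k, f (k + 2*n) = f k) →
    (∀ k, Even k → s(f k, f (k+1)) ∈ G.edgeSet \ H.edgeSet) →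
    (∀ k, ¬ Even k → s(f k, f (k+1)) ∈ H.edgeSet \ G.edgeSet) →
    (∃ G', TwoSwitch G G' ∧ delta G' H < delta G H) ∨
      (∃ H', TwoSwitch H H' ∧ delta G H' < delta G H) := by
  intro n
  induction n using Nat.strong_induction_on with
  | _ n IH =>
  intro G H f hn hper hred hblue
  by_cases hn2 : n < 2
  · exfalso
    have hn1 : n = 1 := by omega
    subst hn1
    have h2 : f 2 = f 0 := by
      have := hper 0
      norm_num at this
      exact this
    have e0 := hred 0 (by norm_num)
    have e1 := hblue 1 (by decide)
    rw [show (1:ℕ)+1 = 2 from rfl, h2, show s(f 1, f 0) = s(f 0, f 1) from pairswap] at e1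
    exact e1.2 e0.1
  · push_neg at hn2
    have hex : ∃ t, f t ≠ f (t + 3) := by
      by_contra hcon
      push_neg at hcon
      have h30 : f 3 = f 0 := (hcon 0).symm
      have h41 : f 4 = f 1 := (hcon 1).symm
      have e3 := hblue 3 (by decide)
      rw [show (3:ℕ)+1 = 4 from rfl, h30, h41] at e3
      exact e3.2 (hred 0 (by norm_num)).1
    obtain ⟨t, ht⟩ := hex
    by_cases hte : Even t
    · refine walk_core n IH G H (fun k => f (k + t)) hn2 ?_ ?_ ?_ ?_
      · intro k
        beta_reduce
        rw [show k + 2*n + t = (k + t) + 2*n from by omega]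
        exact hper (k+t)
      · intro k hk
        beta_reduce
        rw [show k + 1 + t = (k + t) + 1 from by omega]
        refine hred (k + t) ?_
        rw [Nat.even_iff] at hk hte ⊢
        omega
      · intro k hk
        beta_reduce
        rw [show k + 1 + t = (k + t) + 1 from by omega]
        refine hblue (k + t) ?_
        rw [Nat.even_iff] at hk hte ⊢
        omega
      · beta_reduce
        rw [Nat.zero_add, Nat.add_comm 3 t]
        exact ht
    · have hcore := walk_core n IH H G (fun k => f (k + t)) hn2 ?_ ?_ ?_ ?_
      · rcases hcore with ⟨H', hsw, hlt⟩ | ⟨G', hsw, hlt⟩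
        · right
          refine ⟨H', hsw, ?_⟩
          rw [delta_comm G H', delta_comm G H]
          exact hlt
        · left
          refine ⟨G', hsw, ?_⟩
          rw [delta_comm G' H, delta_comm G H]
          exact hlt
      · intro k
        beta_reduce
        rw [show k + 2*n + t = (k + t) + 2*n from by omega]
        exact hper (k+t)
      · intro k hk
        beta_reduce
        rw [show k + 1 + t = (k + t) + 1 from by omega]
        refine hblue (k + t) ?_
        rw [Nat.even_iff] at hk hte ⊢
        omega
      · intro k hk
        beta_reduce
        rw [show k + 1 + t = (k + t) + 1 from by omega]
        refine hred (k + t) ?_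
        rw [Nat.even_iff] at hk hte ⊢
        omega
      · beta_reduce
        rw [Nat.zero_add, Nat.add_comm 3 t]
        exact ht

end BergeAux

open BergeAux in
/-- **Berge's theorem.**  Two graphs `G` and `H` on a common finite vertex set have the
same degree at every vertex iff `H` can be obtained from `G` by a finite (possibly
empty) sequence of 2-switches. -/
theorem berge_two_switch {V : Type*} [Fintype V] (G H : SimpleGraph V) :
    (∀ v : V, G.degree v = H.degree v) ↔ Relation.ReflTransGen TwoSwitch G H := by
  constructor
  · intro hdeg
    have main : ∀ (D : ℕ) (G H : SimpleGraph V), delta G H = D →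
        (∀ v, G.degree v = H.degree v) → Relation.ReflTransGen TwoSwitch G H := by
      intro D
      induction D using Nat.strong_induction_on with
      | _ D IHD =>
      intro G H hD hdeg
      by_cases h0 : delta G H = 0
      · rw [eq_of_delta_eq_zero h0]
      · have hne : (symmDiff G.edgeSet H.edgeSet).Nonempty :=
          Set.nonempty_of_ncard_ne_zero h0
        obtain ⟨e, he⟩ := hne
        rw [Set.mem_symmDiff] at he
        induction e using Sym2.ind with
        | _ a b =>
        have hwalk : (∃ L f, IsAltWalk G H L f) ∨ (∃ L f, IsAltWalk H G L f) := by
          rcases he with ⟨h1, h2⟩ | ⟨h1, h2⟩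
          · exact exists_altWalk_of_red hdeg ⟨h1, h2⟩
          · exact (exists_altWalk_of_red (fun v => (hdeg v).symm) ⟨h1, h2⟩).symm
        have key : (∃ G', TwoSwitch G G' ∧ delta G' H < delta G H) ∨
            (∃ H', TwoSwitch H H' ∧ delta G H' < delta G H) := by
          rcases hwalk with ⟨L, f, hL, hLe, hperW, hredW, hblueW⟩ |
            ⟨L, f, hL, hLe, hperW, hredW, hblueW⟩
          · obtain ⟨m, hm⟩ := hLe
            refine walk_lemma m G H f (by omega) ?_ hredW hblueW
            intro k
            rw [show 2*m = L from by omega]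
            exact hperW k
          · obtain ⟨m, hm⟩ := hLe
            have hres := walk_lemma m H G f (by omega) ?_ hredW hblueW
            · rcases hres with ⟨H', hsw, hlt⟩ | ⟨G', hsw, hlt⟩
              · right
                refine ⟨H', hsw, ?_⟩
                rw [delta_comm G H', delta_comm G H]
                exact hlt
              · left
                refine ⟨G', hsw, ?_⟩
                rw [delta_comm G' H, delta_comm G H]
                exact hlt
            · intro k
              rw [show 2*m = L from by omega]
              exact hperW k
        rcases key with ⟨G', hsw, hlt⟩ | ⟨H', hsw, hlt⟩
        · have hdeg' : ∀ v, G'.degree v = H.degree v :=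
            fun v => (twoSwitch_degree hsw v).symm.trans (hdeg v)
          exact Relation.ReflTransGen.head hsw (IHD (delta G' H) (hD ▸ hlt) G' H rfl hdeg')
        · have hdeg' : ∀ v, G.degree v = H'.degree v :=
            fun v => (hdeg v).trans (twoSwitch_degree hsw v)
          exact Relation.ReflTransGen.tail (IHD (delta G H') (hD ▸ hlt) G H' rfl hdeg')
            (twoSwitch_symm hsw)
    exact main (delta G H) G H rfl hdeg
  · intro h v
    induction h with
    | refl => rfl
    | tail _ hstep ih => exact ih.trans (twoSwitch_degree hstep v)
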